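/- In a full filtered complex K of dimension n, every simplex σ ∈ K has a unique canonical join decomposition σ = σ_0 * σ_1 * ... * σ_n, where for each ℓ ∈ {0,...,n} the intersection σ ∩ |K_ℓ| equals σ_0 * ... * σ_ℓ (with the convention ∅ * E = E). -/
import Mathlib


open Finset Set
open scoped Classical
noncomputable section

abbrev Zm := WithBot (WithTop ℤ)

variable {E : Type*} [NormedAddCommGroup E] [NormedSpace ℝ E]

/-- A filtered simplicial complex: a geometric simplicial complex `K` in `E`
together with a filtration by subcomplexes `K = K_n ⊇ K_{n-1} ⊇ ... ⊇ K_0`. -/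
structure FilteredComplex (E : Type*) [NormedAddCommGroup E] [NormedSpace ℝ E] where
  n : ℕ
  K : Geometry.SimplicialComplex ℝ E
  filt : ℕ → Set (Finset E)
  filt_sub : ∀ i, filt i ⊆ K.faces
  filt_mono : Monotone filt
  filt_top : ∀ i, n ≤ i → filt i = K.faces
  filt_down : ∀ i, ∀ s ∈ filt i, ∀ t ∈ K.faces, t ⊆ s → t ∈ filt i

/-- Geometric realization of a set of simplices. -/
def creal (S : Set (Finset E)) : Set E := ⋃ s ∈ S, convexHull ℝ (s : Set E)

def FilteredComplex.realLt (F : FilteredComplex E) (i : ℕ) : Set E :=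
  if i = 0 then ∅ else creal (F.filt (i - 1))

/-- The set `|K_i| \ |K_{i-1}|` whose connected components are the `i`-strata. -/
def FilteredComplex.stratumSet (F : FilteredComplex E) (i : ℕ) : Set E :=
  creal (F.filt i) \ F.realLt i

/-- `S` is an `i`-dimensional stratum of `F`. -/
def FilteredComplex.IsStratum (F : FilteredComplex E) (i : ℕ) (S : Set E) : Prop :=
  i ≤ F.n ∧ ∃ x ∈ F.stratumSet i, S = connectedComponentIn (F.stratumSet i) x

/-- A filtered complex is full if each simplex meets each `|K_ℓ|` in a face (or not at all). -/
def FilteredComplex.Full (F : FilteredComplex E) : Prop :=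
  ∀ σ ∈ F.K.faces, ∀ ℓ : ℕ,
    convexHull ℝ (σ : Set E) ∩ creal (F.filt ℓ) = ∅ ∨
    ∃ t, t ⊆ σ ∧ t.Nonempty ∧
      convexHull ℝ (σ : Set E) ∩ creal (F.filt ℓ) = convexHull ℝ (t : Set E)

/-- `dim (σ ∩ |K_i|) + 1`, computed (in a full complex) as the number of vertices of `σ`
lying in `|K_i|`. -/
def FilteredComplex.nrm (F : FilteredComplex E) (σ : Finset E) (i : ℕ) : ℕ :=
  (σ.filter (fun v => v ∈ creal (F.filt i))).card

/-- `p̄`-allowability of a simplex `σ` of a (full) filtered complex: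
for every singular stratum `S` of dimension `i` meeting `σ`,
`dim (σ ∩ S) ≤ dim σ - codim S + p̄(S)`, written additively in `ℤ ∪ {±∞}`. -/
def FilteredComplex.Allowable (F : FilteredComplex E) (p : Set E → Zm) (σ : Finset E) : Prop :=
  ∀ i : ℕ, i < F.n → ∀ S : Set E, F.IsStratum i S →
    (convexHull ℝ (σ : Set E) ∩ S).Nonempty →
    (F.nrm σ i : Zm) + ((F.n - i : ℕ) : Zm) ≤ (σ.card : Zm) + p S

end

noncomputable section
open Finset Set
open scoped Classical

variable {E : Type*} [NormedAddCommGroup E] [NormedSpace ℝ E]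

/-- `f` is the canonical join decomposition `σ = σ_0 * ... * σ_n` of the simplex `σ`
with respect to the filtration `filt`: the factors are pairwise disjoint, their union is `σ`,
and for each `ℓ`, `σ ∩ |K_ℓ| = σ_0 * ... * σ_ℓ` (with `∅ * E = E`, and the convex hull of the
empty set being empty). -/
def CanonDecomp (n : ℕ) (filt : ℕ → Set (Finset E)) (σ : Finset E)
    (f : Fin (n + 1) → Finset E) : Prop :=
  (∀ i j, i ≠ j → Disjoint (f i) (f j)) ∧
  σ = (Finset.univ : Finset (Fin (n + 1))).biUnion f ∧
  ∀ ℓ : Fin (n + 1),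
    convexHull ℝ (σ : Set E) ∩ creal (filt ℓ) =
      convexHull ℝ ((((Finset.univ.filter (fun i => i ≤ ℓ)).biUnion f : Finset E)) : Set E)

lemma creal_mono' {S T : Set (Finset E)} (h : S ⊆ T) : creal S ⊆ creal T :=
  Set.biUnion_subset_biUnion_left h

lemma finset_subset_of_hull_subset {σ t₁ t₂ : Finset E}
    (h : AffineIndependent ℝ ((↑) : σ → E)) (h1 : t₁ ⊆ σ) (h2 : t₂ ⊆ σ)
    (he : convexHull ℝ (t₁ : Set E) ⊆ convexHull ℝ (t₂ : Set E)) : t₁ ⊆ t₂ := by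
  intro v hv
  have hv1 : v ∈ convexHull ℝ (t₂ : Set E) := he (subset_convexHull ℝ _ hv)
  have hvσ : ({v} : Finset E) ⊆ σ := by simpa using h1 hv
  have hinter : v ∈ convexHull ℝ ((({v} : Finset E) : Set E) ∩ (t₂ : Set E)) := by
    rw [h.convexHull_inter hvσ h2]
    exact ⟨subset_convexHull ℝ _ (by simp), hv1⟩
  by_contra hvt
  have hemp : ((({v} : Finset E) : Set E) ∩ (t₂ : Set E)) = ∅ := by
    ext x
    simp only [Set.mem_inter_iff, Finset.coe_singleton, Set.mem_singleton_iff,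
      Finset.mem_coe, Set.mem_empty_iff_false, iff_false, not_and]
    rintro rfl; exact hvt
  rw [hemp] at hinter
  simp at hinter

lemma finset_eq_of_hull_eq {σ t₁ t₂ : Finset E}
    (h : AffineIndependent ℝ ((↑) : σ → E)) (h1 : t₁ ⊆ σ) (h2 : t₂ ⊆ σ)
    (he : convexHull ℝ (t₁ : Set E) = convexHull ℝ (t₂ : Set E)) : t₁ = t₂ :=
  Finset.Subset.antisymm (finset_subset_of_hull_subset h h1 h2 he.le)
    (finset_subset_of_hull_subset h h2 h1 he.ge)

/-- In a full filtered complex `K` of dimension `n`, every simplex `σ ∈ K`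
has a unique canonical join decomposition `σ = σ_0 * σ_1 * ... * σ_n`, where for each
`ℓ ∈ {0,...,n}` the intersection `σ ∩ |K_ℓ|` equals `σ_0 * ... * σ_ℓ`. -/
theorem canonDecomp_exists_unique (F : FilteredComplex E) (hfull : F.Full)
    (σ : Finset E) (hσ : σ ∈ F.K.faces) :
    ∃! f : Fin (F.n + 1) → Finset E, CanonDecomp F.n F.filt σ f := by
  have hindep := F.K.indep hσ
  -- the "level `ℓ` part" of σ
  set g : ℕ → Finset E := fun ℓ => σ.filter (fun v => v ∈ creal (F.filt ℓ)) with hg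
  -- every vertex lies in the top level
  have htop : ∀ v ∈ σ, v ∈ creal (F.filt F.n) := by
    intro v hv
    have hvK : ({v} : Finset E) ∈ F.K.faces :=
      F.K.down_closed hσ (by simpa using hv) (by simp)
    have : ({v} : Finset E) ∈ F.filt F.n := by
      rw [F.filt_top F.n le_rfl]; exact hvK
    exact Set.mem_biUnion this (subset_convexHull ℝ _ (by simp))
  -- key: the intersection with `|K_ℓ|` is the hull of `g ℓ`
  have key : ∀ ℓ : ℕ,
      convexHull ℝ (σ : Set E) ∩ creal (F.filt ℓ) = convexHull ℝ ((g ℓ : Finset E) : Set E) := by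
    intro ℓ
    rcases hfull σ hσ ℓ with hemp | ⟨t, htσ, htne, ht⟩
    · have hgℓ : g ℓ = ∅ := by
        rw [Finset.eq_empty_iff_forall_notMem]
        intro v hv
        rw [hg, Finset.mem_filter] at hv
        have : v ∈ convexHull ℝ (σ : Set E) ∩ creal (F.filt ℓ) :=
          ⟨subset_convexHull ℝ _ hv.1, hv.2⟩
        rw [hemp] at this; exact this
      rw [hemp, hgℓ]; simp
    · have hteq : g ℓ = t := by
        apply Finset.Subset.antisymm
        · intro v hv
          rw [hg, Finset.mem_filter] at hv
          have : v ∈ convexHull ℝ (t : Set E) := by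
            rw [← ht]; exact ⟨subset_convexHull ℝ _ hv.1, hv.2⟩
          have hvt : ({v} : Finset E) ⊆ t :=
            finset_subset_of_hull_subset hindep (by simpa using hv.1) htσ
              (by rw [Finset.coe_singleton, convexHull_singleton]
                  exact Set.singleton_subset_iff.2 this)
          simpa using hvt
        · intro v hv
          have : v ∈ convexHull ℝ (σ : Set E) ∩ creal (F.filt ℓ) := by
            rw [ht]; exact subset_convexHull ℝ _ hv
          rw [hg, Finset.mem_filter]
          exact ⟨finset_subset_of_hull_subset hindep htσ (Finset.Subset.refl σ)
            (convexHull_mono (by exact_mod_cast htσ)) hv, this.2⟩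
      rw [ht, hteq]
  -- the canonical decomposition: vertices whose minimal level is exactly `ℓ`
  set f : Fin (F.n + 1) → Finset E := fun ℓ =>
    σ.filter (fun v => v ∈ creal (F.filt ℓ) ∧
      ∀ k : Fin (F.n + 1), v ∈ creal (F.filt k) → ℓ ≤ k) with hf
  have hlast : ∀ v ∈ σ, v ∈ creal (F.filt (Fin.last F.n : Fin (F.n + 1)))  := by
    intro v hv; simpa using htop v hv
  -- the biUnion up to ℓ of f equals g ℓ
  have hbi : ∀ ℓ : Fin (F.n + 1),
      (Finset.univ.filter (fun i => i ≤ ℓ)).biUnion f = g (ℓ : ℕ) := by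
    intro ℓ
    ext v
    simp only [Finset.mem_biUnion, Finset.mem_filter, Finset.mem_univ, true_and, hf, hg]
    constructor
    · rintro ⟨i, hiℓ, hvσ, hvi, -⟩
      exact ⟨hvσ, creal_mono' (F.filt_mono (show (i : ℕ) ≤ (ℓ : ℕ) from hiℓ)) hvi⟩
    · rintro ⟨hvσ, hvℓ⟩
      set A : Finset (Fin (F.n + 1)) :=
        Finset.univ.filter (fun k => v ∈ creal (F.filt k)) with hA
      have hAne : A.Nonempty := ⟨ℓ, by simp [hA, hvℓ]⟩
      refine ⟨A.min' hAne, A.min'_le ℓ (Finset.mem_filter.2 ⟨Finset.mem_univ _, hvℓ⟩), hvσ,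
        ?_, ?_⟩
      · exact (Finset.mem_filter.1 (A.min'_mem hAne)).2
      · intro k hk; exact A.min'_le k (Finset.mem_filter.2 ⟨Finset.mem_univ _, hk⟩)
  -- membership characterization of any canonical decomposition
  have hchar : ∀ f' : Fin (F.n + 1) → Finset E, CanonDecomp F.n F.filt σ f' →
      ∀ ℓ v, v ∈ f' ℓ ↔ (v ∈ (Finset.univ.filter (fun i => i ≤ ℓ)).biUnion f' ∧
        ∀ k, v ∈ (Finset.univ.filter (fun i => i ≤ k)).biUnion f' → ℓ ≤ k) := by
    rintro f' ⟨hdisj, hunion, -⟩ ℓ v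
    constructor
    · intro hv
      refine ⟨Finset.mem_biUnion.2 ⟨ℓ, by simp, hv⟩, ?_⟩
      intro k hk
      obtain ⟨i, hik, hvi⟩ := Finset.mem_biUnion.1 hk
      rw [Finset.mem_filter] at hik
      rcases eq_or_ne i ℓ with rfl | hne
      · exact hik.2
      · exact absurd hv (Finset.disjoint_left.1 (hdisj i ℓ hne) hvi)
    · rintro ⟨hv, hmin⟩
      obtain ⟨i, hiℓ, hvi⟩ := Finset.mem_biUnion.1 hv
      rw [Finset.mem_filter] at hiℓ
      have hℓi : ℓ ≤ i := hmin i (Finset.mem_biUnion.2 ⟨i, by simp, hvi⟩)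
      have : i = ℓ := le_antisymm hiℓ.2 hℓi
      exact this ▸ hvi
  have hfCD : CanonDecomp F.n F.filt σ f := by
    refine ⟨?_, ?_, ?_⟩
    · intro i j hij
      rw [Finset.disjoint_left]
      intro v hvi hvj
      rw [hf, Finset.mem_filter] at hvi hvj
      exact hij (le_antisymm (hvi.2.2 j hvj.2.1) (hvj.2.2 i hvi.2.1))
    · ext v
      constructor
      · intro hv
        set A : Finset (Fin (F.n + 1)) :=
          Finset.univ.filter (fun k => v ∈ creal (F.filt k)) with hA
        have hAne : A.Nonempty :=
          ⟨Fin.last F.n, Finset.mem_filter.2 ⟨Finset.mem_univ _, hlast v hv⟩⟩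
        refine Finset.mem_biUnion.2 ⟨A.min' hAne, Finset.mem_univ _, ?_⟩
        rw [hf, Finset.mem_filter]
        refine ⟨hv, ?_, ?_⟩
        · exact (Finset.mem_filter.1 (A.min'_mem hAne)).2
        · intro k hk; exact A.min'_le k (Finset.mem_filter.2 ⟨Finset.mem_univ _, hk⟩)
      · intro hv
        obtain ⟨i, -, hvi⟩ := Finset.mem_biUnion.1 hv
        rw [hf, Finset.mem_filter] at hvi; exact hvi.1
    · intro ℓ
      rw [hbi ℓ]; exact key ℓ
  refine ⟨f, hfCD, ?_⟩
  intro f' hf'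
  -- the partial unions of f' agree with g
  have hbi' : ∀ ℓ : Fin (F.n + 1),
      (Finset.univ.filter (fun i => i ≤ ℓ)).biUnion f' = g (ℓ : ℕ) := by
    intro ℓ
    have hsub' : (Finset.univ.filter (fun i => i ≤ ℓ)).biUnion f' ⊆ σ := by
      intro v hv
      obtain ⟨i, -, hvi⟩ := Finset.mem_biUnion.1 hv
      rw [hf'.2.1]
      exact Finset.mem_biUnion.2 ⟨i, Finset.mem_univ _, hvi⟩
    refine finset_eq_of_hull_eq hindep hsub' (Finset.filter_subset _ _) ?_
    rw [← (hf'.2.2 ℓ), key (ℓ : ℕ)]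
  funext ℓ
  ext v
  rw [hchar f' hf' ℓ v, hchar f hfCD ℓ v]
  simp only [hbi, hbi']

end
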